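/- Let f be a real-valued EO signature of arity 2n ≥ 4. Then f satisfies -ARS (f(α) = −f(ᾱ) for all α) if and only if for all distinct indices i,j, the signature f^{x_i≠x_j} = f_{ij}^{01} + f_{ij}^{10} satisfies -ARS. -/
import Mathlib


open Finset

/-- Hamming weight of a Boolean vector. -/
def wtB {ι : Type*} [Fintype ι] (a : ι → Bool) : ℕ :=
  (Finset.univ.filter fun i => a i = true).card

/-- Componentwise XOR of three Boolean vectors. -/
def xor3 {ι : Type*} (a b c : ι → Bool) : ι → Bool :=
  fun i => Bool.xor (a i) (Bool.xor (b i) (c i))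

/-- A (support of a) signature is affine if it is nonempty and closed under α⊕β⊕γ. -/
def AffineS {ι : Type*} [Fintype ι] [DecidableEq ι] (S : Finset (ι → Bool)) : Prop :=
  S.Nonempty ∧ ∀ a ∈ S, ∀ b ∈ S, ∀ c ∈ S, xor3 a b c ∈ S

/-- Componentwise complement. -/
def cmpl {ι : Type*} (a : ι → Bool) : ι → Bool := fun i => !(a i)

/-- A real-valued EO signature vanishes on all vectors whose weight is not half the arity. -/
def IsEOR {ι : Type*} [Fintype ι] (f : (ι → Bool) → ℝ) : Prop :=
  ∀ a, 2 * wtB a ≠ Fintype.card ι → f a = 0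

/-- Arrow reversal symmetry. -/
def ARS {ι : Type*} (f : (ι → Bool) → ℝ) : Prop := ∀ a, f a = f (cmpl a)

/-- Minus arrow reversal symmetry. -/
def NegARS {ι : Type*} (f : (ι → Bool) → ℝ) : Prop := ∀ a, f a = - f (cmpl a)

/-- Extend an assignment on the variables other than `i, j` by `x_i = a`, `x_j = b`. -/
def extIJ {N : ℕ} (i j : Fin N) (a b : Bool)
    (β : {l : Fin N // l ≠ i ∧ l ≠ j} → Bool) : Fin N → Bool :=
  fun l => if h1 : l = i then a else if h2 : l = j then b else β ⟨l, h1, h2⟩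

/-- `f^{x_i ≠ x_j} = f_{ij}^{01} + f_{ij}^{10}`. -/
def neqP {N : ℕ} (f : (Fin N → Bool) → ℝ) (i j : Fin N) :
    ({l : Fin N // l ≠ i ∧ l ≠ j} → Bool) → ℝ :=
  fun β => f (extIJ i j false true β) + f (extIJ i j true false β)

/-- `f^{x_i ≠⁻ x_j} = f_{ij}^{01} - f_{ij}^{10}`. -/
def neqM {N : ℕ} (f : (Fin N → Bool) → ℝ) (i j : Fin N) :
    ({l : Fin N // l ≠ i ∧ l ≠ j} → Bool) → ℝ :=
  fun β => f (extIJ i j false true β) - f (extIJ i j true false β)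

lemma cmpl_extIJ {N : ℕ} (i j : Fin N) (a b : Bool) (β : {l : Fin N // l ≠ i ∧ l ≠ j} → Bool) :
    cmpl (extIJ i j a b β) = extIJ i j (!a) (!b) (cmpl β) := by
  funext l
  simp only [cmpl, extIJ]
  split_ifs <;> rfl

lemma key {N : ℕ} (f : (Fin N → Bool) → ℝ) (i j : Fin N)
    (h : NegARS (neqP f i j)) (α : Fin N → Bool) (hi : α i = false) (hj : α j = true) :
    f α + f (fun l => if l = i then true else if l = j then false else α l)
      + (f (cmpl α) + f (cmpl (fun l => if l = i then true else if l = j then false else α l))) = 0 := by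
  have h1 := h (fun l : {l : Fin N // l ≠ i ∧ l ≠ j} => α l.1)
  simp only [neqP] at h1
  have e1 : extIJ i j false true (fun l : {l : Fin N // l ≠ i ∧ l ≠ j} => α l.1) = α := by
    funext l
    simp only [extIJ]
    split_ifs with p q
    · subst p; exact hi.symm
    · subst q; exact hj.symm
    · rfl
  have e2 : extIJ i j true false (fun l : {l : Fin N // l ≠ i ∧ l ≠ j} => α l.1)
      = fun l => if l = i then true else if l = j then false else α l := by
    funext l
    simp only [extIJ]
    split_ifs <;> rfl
  have e3 : extIJ i j false true (cmpl (fun l : {l : Fin N // l ≠ i ∧ l ≠ j} => α l.1))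
      = cmpl (fun l => if l = i then true else if l = j then false else α l) := by
    funext l
    simp only [extIJ, cmpl]
    split_ifs <;> rfl
  have e4 : extIJ i j true false (cmpl (fun l : {l : Fin N // l ≠ i ∧ l ≠ j} => α l.1))
      = cmpl α := by
    funext l
    simp only [extIJ, cmpl]
    split_ifs with p q
    · subst p; rw [hi]; rfl
    · subst q; rw [hj]; rfl
    · rfl
  rw [e1, e2, e3, e4] at h1
  linarith

lemma wtB_cmpl {ι : Type*} [Fintype ι] [DecidableEq ι] (a : ι → Bool) :
    wtB (cmpl a) = Fintype.card ι - wtB a := by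
  unfold wtB cmpl
  rw [← Finset.card_compl (Finset.univ.filter fun i => a i = true)]
  congr 1
  ext i
  simp

theorem stmt14 {n : ℕ} (hn : 2 ≤ n) (f : (Fin (2 * n) → Bool) → ℝ)
    (hEO : IsEOR f) :
    NegARS f ↔ ∀ i j : Fin (2 * n), i ≠ j → NegARS (neqP f i j) := by
  constructor
  · intro hA i j hij β
    simp only [neqP]
    rw [hA (extIJ i j false true β), hA (extIJ i j true false β),
      cmpl_extIJ, cmpl_extIJ]
    simp only [Bool.not_false, Bool.not_true]
    ring
  · intro h α
    by_cases hw : 2 * wtB α = Fintype.card (Fin (2 * n))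
    · -- weight n case
      have hwle : wtB α ≤ Fintype.card (Fin (2 * n)) := by
        unfold wtB; exact (Finset.card_filter_le _ _).trans (by simp)
      have hcard : Fintype.card (Fin (2 * n)) = 2 * n := by simp
      have hwn : wtB α = n := by omega
      -- find i ≠ i' with α = true, and j with α = false
      have h2 : 1 < (Finset.univ.filter fun l => α l = true).card := by
        unfold wtB at hwn; omega
      obtain ⟨i, hi, i', hi', hii'⟩ := Finset.one_lt_card.mp h2
      simp only [Finset.mem_filter] at hi hi'
      have hj : ∃ j, α j = false := by
        by_contra hc
        push_neg at hc
        have : (Finset.univ.filter fun l => α l = true) = Finset.univ := by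
          ext l
          simp only [Finset.mem_filter, Finset.mem_univ, true_and, iff_true]
          cases hαl : α l with
          | false => exact absurd hαl (hc l)
          | true => rfl
        unfold wtB at hwn
        rw [this] at hwn
        simp at hwn
        omega
      obtain ⟨j, hjf⟩ := hj
      have hji : j ≠ i := fun e => by rw [e, hi.2] at hjf; exact Bool.noConfusion hjf
      have hji' : j ≠ i' := fun e => by rw [e, hi'.2] at hjf; exact Bool.noConfusion hjf
      -- three key equations
      set α1 : Fin (2 * n) → Bool := fun l => if l = j then true else if l = i then false else α l with hα1
      set α2 : Fin (2 * n) → Bool := fun l => if l = j then true else if l = i' then false else α l with hα2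
      have k1 := key f j i (h j i hji) α hjf hi.2
      have k2 := key f j i' (h j i' hji') α hjf hi'.2
      have hα1i : α1 i = false := by simp [hα1, hji.symm]
      have hα1i' : α1 i' = true := by simp [hα1, hji'.symm, Ne.symm hii', hi'.2]
      have k3 := key f i i' (h i i' hii') α1 hα1i hα1i'
      have e12 : (fun l => if l = i then true else if l = i' then false else α1 l) = α2 := by
        funext l
        simp only [hα1, hα2]
        by_cases p : l = i
        · subst p; simp [hji.symm, hii', hi.2]
        · by_cases q : l = i'
          · subst q; simp [hji'.symm, p]
          · simp [p, q]
      rw [e12] at k3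
      linarith
    · have h0 : f α = 0 := hEO α hw
      have hwle : wtB α ≤ Fintype.card (Fin (2 * n)) := by
        unfold wtB; exact (Finset.card_filter_le _ _).trans (by simp)
      have h0' : f (cmpl α) = 0 := by
        apply hEO
        rw [wtB_cmpl]
        omega
      rw [h0, h0']
      ring
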